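/- Let ψ: ℝ → (−∞, +∞] be defined by ψ(t) = φ(t) for t ∈ [0,1] and ψ(t) = +∞ otherwise, where φ is a proper lower semicontinuous convex function on ℝ with [0,1] ⊆ int(dom φ). Then for any matrix X and any ρ > 0, sup_{W ∈ 𝕏} { ⟨W, ρX⟩ − ∑_{i=1}^n ψ(σ_i(W)) } = ∑_{i=1}^n ψ*(ρ·σ_i(X)), where ψ* is the Fenchel conjugate of ψ. -/

import Mathlib

/-- Singular values of a real `n × m` matrix (in some order). -/
noncomputable def singVals {n m : ℕ} (X : Matrix (Fin n) (Fin m) ℝ) (i : Fin n) : ℝ :=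
  Real.sqrt ((Matrix.isHermitian_mul_conjTranspose_self X).eigenvalues i)

/-- The trace (Frobenius) inner product of two real matrices. -/
def minner {n m : ℕ} (A B : Matrix (Fin n) (Fin m) ℝ) : ℝ :=
  ∑ i, ∑ j, A i j * B i j

/-- The Fenchel conjugate `ψ*` of the function `ψ` equal to `φ` on `[0,1]` and `+∞`
elsewhere: `ψ*(s) = sup_{t ∈ [0,1]} (s·t − φ(t))`. -/
noncomputable def psiStar (φ : ℝ → ℝ) (s : ℝ) : ℝ :=
  sSup {v : ℝ | ∃ t ∈ Set.Icc (0:ℝ) 1, v = s * t - φ t}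

open Matrix Finset

namespace Stmt17

/-- Rectangular diagonal matrix. -/
def rect (n m : ℕ) (d : Fin n → ℝ) : Matrix (Fin n) (Fin m) ℝ :=
  Matrix.of fun i j => if (j : ℕ) = (i : ℕ) then d i else 0

lemma rect_apply {n m : ℕ} (d : Fin n → ℝ) (i : Fin n) (j : Fin m) :
    rect n m d i j = if (j : ℕ) = (i : ℕ) then d i else 0 := rfl

lemma coe_eq_castLE_iff {n m : ℕ} (hnm : n ≤ m) (k : Fin n) (l : Fin m) :
    (l : ℕ) = (k : ℕ) ↔ l = Fin.castLE hnm k :=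
  ⟨fun h => Fin.ext (by simpa using h), fun h => by subst h; simp⟩

lemma sum_single_castLE {n m : ℕ} (hnm : n ≤ m) (k : Fin n) (f : Fin m → ℝ) :
    (∑ l : Fin m, if (l : ℕ) = (k : ℕ) then f l else 0) = f (Fin.castLE hnm k) := by
  rw [Finset.sum_congr rfl (fun l _ => if_congr (coe_eq_castLE_iff hnm k l) rfl rfl),
    Finset.sum_ite_eq' univ (Fin.castLE hnm k) f]
  simp

lemma rect_mul_rect_transpose {n m : ℕ} (hnm : n ≤ m) (a b : Fin n → ℝ) :
    rect n m a * (rect n m b)ᵀ = Matrix.diagonal (fun i => a i * b i) := by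
  ext i k
  rw [Matrix.mul_apply]
  have key : ∀ l : Fin m, rect n m a i l * (rect n m b)ᵀ l k
      = if (l : ℕ) = (i : ℕ) then (if (i : ℕ) = (k : ℕ) then a i * b k else 0) else 0 := by
    intro l
    simp only [transpose_apply, rect_apply]
    by_cases h1 : (l : ℕ) = (i : ℕ)
    · by_cases h2 : (i : ℕ) = (k : ℕ)
      · simp [h1, h2, h1.trans h2]
      · have h3 : ¬(l : ℕ) = (k : ℕ) := by rw [h1]; exact h2
        simp [h1, h2, h3]
    · simp [h1]
  rw [Finset.sum_congr rfl (fun l _ => key l), sum_single_castLE hnm i]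
  by_cases h : i = k
  · subst h; simp [Matrix.diagonal]
  · have h' : (i : ℕ) ≠ (k : ℕ) := fun hh => h (Fin.ext hh)
    simp [Matrix.diagonal_apply_ne _ h, h']

lemma minner_eq_trace {n m : ℕ} (A B : Matrix (Fin n) (Fin m) ℝ) :
    minner A B = Matrix.trace (A * Bᵀ) := by
  simp [minner, Matrix.trace, Matrix.mul_apply, Matrix.diag]

lemma minner_smul {n m : ℕ} (A B : Matrix (Fin n) (Fin m) ℝ) (ρ : ℝ) :
    minner A (ρ • B) = ρ * minner A B := by
  simp only [minner, Matrix.smul_apply, smul_eq_mul, Finset.mul_sum]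
  congr 1; ext i; congr 1; ext j; ring

end Stmt17

namespace Stmt17

lemma psiStar_isGreatest {φ : ℝ → ℝ} (hφc : Continuous φ) (s : ℝ) :
    IsGreatest {v : ℝ | ∃ t ∈ Set.Icc (0:ℝ) 1, v = s * t - φ t} (psiStar φ s) := by
  have hset : {v : ℝ | ∃ t ∈ Set.Icc (0:ℝ) 1, v = s * t - φ t}
      = (fun t => s * t - φ t) '' Set.Icc 0 1 := by
    ext v; constructor
    · rintro ⟨t, ht, rfl⟩; exact ⟨t, ht, rfl⟩
    · rintro ⟨t, ht, rfl⟩; exact ⟨t, ht, rfl⟩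
  have hcomp : IsCompact ((fun t => s * t - φ t) '' Set.Icc (0:ℝ) 1) :=
    isCompact_Icc.image ((continuous_const.mul continuous_id).sub hφc)
  have hne : ((fun t => s * t - φ t) '' Set.Icc (0:ℝ) 1).Nonempty :=
    ⟨s * 0 - φ 0, 0, by norm_num, rfl⟩
  constructor
  · rw [psiStar, hset]; exact hcomp.sSup_mem hne
  · intro v hv
    rw [psiStar, hset]
    exact le_csSup hcomp.bddAbove (hset ▸ hv)

lemma continuous_of_convexOn {φ : ℝ → ℝ} (hφ : ConvexOn ℝ Set.univ φ) : Continuous φ := by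
  have := hφ.continuousOn isOpen_univ
  rwa [continuousOn_univ] at this

end Stmt17

namespace Stmt17

open Polynomial

lemma charpoly_conj_orth {k : ℕ} (U A : Matrix (Fin k) (Fin k) ℝ) (hU : U * Uᵀ = 1) :
    (U * A * Uᵀ).charpoly = A.charpoly := by
  classical
  set f : Matrix (Fin k) (Fin k) ℝ →+* Matrix (Fin k) (Fin k) ℝ[X] :=
    (Polynomial.C : ℝ →+* ℝ[X]).mapMatrix with hf
  have h1 : f U * f Uᵀ = 1 := by rw [← _root_.map_mul, hU, _root_.map_one]
  have expand : ∀ M : Matrix (Fin k) (Fin k) ℝ,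
      Matrix.charmatrix M = Matrix.scalar (Fin k) Polynomial.X - f M := fun _ => rfl
  have hscal : f U * Matrix.scalar (Fin k) Polynomial.X * f Uᵀ
      = Matrix.scalar (Fin k) Polynomial.X := by
    rw [mul_assoc, (Matrix.scalar_commute Polynomial.X (fun r' => Commute.all _ _) (f Uᵀ)).eq,
      ← mul_assoc, h1, one_mul]
  have hcm : Matrix.charmatrix (U * A * Uᵀ) = f U * Matrix.charmatrix A * f Uᵀ := by
    rw [expand, expand, _root_.map_mul, _root_.map_mul, mul_sub, sub_mul, hscal]
  rw [Matrix.charpoly, Matrix.charpoly, hcm, Matrix.det_mul, Matrix.det_mul, mul_right_comm,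
    ← Matrix.det_mul, h1, Matrix.det_one, one_mul]

lemma charpoly_diagonal {k : ℕ} (d : Fin k → ℝ) :
    (Matrix.diagonal d).charpoly = ∏ i, (Polynomial.X - Polynomial.C (d i)) := by
  classical
  have hcm : Matrix.charmatrix (Matrix.diagonal d)
      = Matrix.diagonal (fun i => Polynomial.X - Polynomial.C (d i)) := by
    ext i j
    by_cases h : i = j
    · subst h; simp
    · rw [Matrix.charmatrix_apply_ne _ _ _ h, Matrix.diagonal_apply_ne _ h,
        Matrix.diagonal_apply_ne _ h, Polynomial.C_0, neg_zero]
  rw [Matrix.charpoly, hcm, Matrix.det_diagonal]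

lemma multiset_map_eq_of_prod {k : ℕ} (μ d : Fin k → ℝ)
    (h : ∏ i, (Polynomial.X - Polynomial.C (μ i)) = ∏ i, (Polynomial.X - Polynomial.C (d i))) :
    Multiset.map μ Finset.univ.val = Multiset.map d Finset.univ.val := by
  have h2 : ((Multiset.map μ Finset.univ.val).map fun a => Polynomial.X - Polynomial.C a).prod
      = ((Multiset.map d Finset.univ.val).map fun a => Polynomial.X - Polynomial.C a).prod := by
    rwa [Multiset.map_map, Multiset.map_map, ← Finset.prod_eq_multiset_prod,
      ← Finset.prod_eq_multiset_prod]
  have := congrArg Polynomial.roots h2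
  rwa [Polynomial.roots_multiset_prod_X_sub_C, Polynomial.roots_multiset_prod_X_sub_C] at this

lemma eigs_conj_diag {k : ℕ} {U : Matrix (Fin k) (Fin k) ℝ} (hU : U * Uᵀ = 1)
    (d : Fin k → ℝ) (h : (U * Matrix.diagonal d * Uᵀ).IsHermitian) :
    Multiset.map h.eigenvalues Finset.univ.val = Multiset.map d Finset.univ.val := by
  classical
  set V : Matrix (Fin k) (Fin k) ℝ := (h.eigenvectorUnitary : Matrix (Fin k) (Fin k) ℝ) with hVdef
  have hVunit : V * Vᵀ = 1 := by
    have := (Matrix.mem_unitaryGroup_iff).mp h.eigenvectorUnitary.2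
    rwa [Matrix.star_eq_conjTranspose, Matrix.conjTranspose_eq_transpose_of_trivial] at this
  have hspec : U * Matrix.diagonal d * Uᵀ = V * Matrix.diagonal h.eigenvalues * Vᵀ := by
    have := h.spectral_theorem
    rwa [Unitary.conjStarAlgAut_apply, Matrix.star_eq_conjTranspose, Matrix.conjTranspose_eq_transpose_of_trivial,
      show (RCLike.ofReal ∘ h.eigenvalues : Fin k → ℝ) = h.eigenvalues from rfl] at this
  have e1 : (U * Matrix.diagonal d * Uᵀ).charpoly
      = ∏ i, (Polynomial.X - Polynomial.C (h.eigenvalues i)) :=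
    (congrArg Matrix.charpoly hspec).trans
      (by rw [charpoly_conj_orth V _ hVunit, charpoly_diagonal])
  have e2 : (U * Matrix.diagonal d * Uᵀ).charpoly
      = ∏ i, (Polynomial.X - Polynomial.C (d i)) := by
    rw [charpoly_conj_orth U _ hU, charpoly_diagonal]
  exact multiset_map_eq_of_prod _ _ (e1.symm.trans e2)

lemma sum_comp_of_multiset_map_eq {k : ℕ} {f g : Fin k → ℝ}
    (h : Multiset.map f Finset.univ.val = Multiset.map g Finset.univ.val) (φ : ℝ → ℝ) :
    ∑ i, φ (f i) = ∑ i, φ (g i) := by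
  have := congrArg (fun s => (Multiset.map φ s).sum) h
  simpa [Finset.sum, Multiset.map_map, Function.comp_def] using this

lemma mem_of_multiset_map_eq {k : ℕ} {f g : Fin k → ℝ}
    (h : Multiset.map f Finset.univ.val = Multiset.map g Finset.univ.val) (i : Fin k) :
    ∃ j, f i = g j := by
  have hmem : f i ∈ Multiset.map g Finset.univ.val := by
    rw [← h]
    exact Multiset.mem_map_of_mem f (Finset.mem_univ i)
  obtain ⟨j, _, hj⟩ := Multiset.mem_map.mp hmem
  exact ⟨j, hj.symm⟩

end Stmt17

namespace Stmt17

lemma sub_perm {k : ℕ} (a bb : Fin k → ℝ) (ha : ∀ i, 0 ≤ a i) (hbb : ∀ i, 0 ≤ bb i)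
    (B : Matrix (Fin k) (Fin k) ℝ)
    (hrow : ∀ i, ∑ j, |B i j| ≤ 1) (hcol : ∀ j, ∑ i, |B i j| ≤ 1) :
    ∃ π : Equiv.Perm (Fin k), ∑ i, ∑ j, a i * bb j * B i j ≤ ∑ i, a i * bb (π i) := by
  classical
  set B' : Matrix (Fin k) (Fin k) ℝ := Matrix.of (fun i j => |B i j|) with hB'
  have hB'app : ∀ i j, B' i j = |B i j| := fun i j => rfl
  have hB'nn : ∀ i j, 0 ≤ B' i j := fun i j => abs_nonneg _
  have habnn : ∀ i j, 0 ≤ a i * bb j := fun i j => mul_nonneg (ha i) (hbb j)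
  have step1 : ∑ i, ∑ j, a i * bb j * B i j ≤ ∑ i, ∑ j, a i * bb j * B' i j := by
    refine Finset.sum_le_sum fun i _ => Finset.sum_le_sum fun j _ => ?_
    exact mul_le_mul_of_nonneg_left (le_abs_self _) (habnn i j)
  -- complete B' to a doubly stochastic matrix D
  obtain ⟨D, hD, hB'D⟩ : ∃ D, D ∈ doublyStochastic ℝ (Fin k) ∧ ∀ i j, B' i j ≤ D i j := by
    set r : Fin k → ℝ := fun i => 1 - ∑ j, B' i j with hrdef
    set c : Fin k → ℝ := fun j => 1 - ∑ i, B' i j with hcdef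
    have hr : ∀ i, 0 ≤ r i := fun i => by
      simp only [hrdef, sub_nonneg]
      calc ∑ j, B' i j = ∑ j, |B i j| := rfl
        _ ≤ 1 := hrow i
    have hc : ∀ j, 0 ≤ c j := fun j => by
      simp only [hcdef, sub_nonneg]
      calc ∑ i, B' i j = ∑ i, |B i j| := rfl
        _ ≤ 1 := hcol j
    set s : ℝ := ∑ i, r i with hsdef
    have hsc : ∑ j, c j = s := by
      simp only [hsdef, hrdef, hcdef, Finset.sum_sub_distrib]
      rw [Finset.sum_comm]
    by_cases hs : s = 0
    · refine ⟨B', ?_, fun i j => le_refl _⟩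
      rw [mem_doublyStochastic_iff_sum]
      refine ⟨hB'nn, fun i => ?_, fun j => ?_⟩
      · have := (Finset.sum_eq_zero_iff_of_nonneg (fun i _ => hr i)).mp (hsdef ▸ hs) i
          (Finset.mem_univ i)
        have := sub_eq_zero.mp this
        linarith [this]
      · have h0 : ∑ j, c j = 0 := by rw [hsc]; exact hs
        have := (Finset.sum_eq_zero_iff_of_nonneg (fun j _ => hc j)).mp h0 j (Finset.mem_univ j)
        have := sub_eq_zero.mp this
        linarith [this]
    · have hspos : 0 < s := lt_of_le_of_ne (Finset.sum_nonneg fun i _ => hr i) (Ne.symm hs)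
      refine ⟨B' + Matrix.of (fun i j => r i * c j / s), ?_, fun i j => ?_⟩
      · rw [mem_doublyStochastic_iff_sum]
        refine ⟨fun i j => ?_, fun i => ?_, fun j => ?_⟩
        · exact add_nonneg (hB'nn i j) (div_nonneg (mul_nonneg (hr i) (hc j)) hspos.le)
        · have : ∑ j, (B' + Matrix.of (fun i j => r i * c j / s)) i j
              = (∑ j, B' i j) + r i * (∑ j, c j) / s := by
            simp [Matrix.add_apply, Finset.sum_add_distrib, Finset.mul_sum, Finset.sum_div]
          rw [this, hsc, mul_div_assoc, div_self hs, mul_one]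
          simp [hrdef]
        · have : ∑ i, (B' + Matrix.of (fun i j => r i * c j / s)) i j
              = (∑ i, B' i j) + (∑ i, r i) * c j / s := by
            simp [Matrix.add_apply, Finset.sum_add_distrib, Finset.sum_mul, Finset.sum_div]
          rw [this, ← hsdef, mul_comm, mul_div_assoc, div_self hs, mul_one]
          simp [hcdef]
      · simp only [Matrix.add_apply, Matrix.of_apply, le_add_iff_nonneg_right]
        exact div_nonneg (mul_nonneg (hr i) (hc j)) hspos.le
  have step2 : ∑ i, ∑ j, a i * bb j * B' i j ≤ ∑ i, ∑ j, a i * bb j * D i j := by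
    refine Finset.sum_le_sum fun i _ => Finset.sum_le_sum fun j _ => ?_
    exact mul_le_mul_of_nonneg_left (hB'D i j) (habnn i j)
  obtain ⟨w, hw0, hw1, hwD⟩ := exists_eq_sum_perm_of_mem_doublyStochastic hD
  set v : Equiv.Perm (Fin k) → ℝ := fun π => ∑ i, a i * bb (π i) with hvdef
  have hP : ∀ (π : Equiv.Perm (Fin k)) (i j : Fin k),
      (π.permMatrix ℝ) i j = if j = π i then 1 else 0 := by
    intro π i j
    simp only [Equiv.Perm.permMatrix, PEquiv.toMatrix_apply, Equiv.toPEquiv_apply,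
      Option.mem_def, Option.some.injEq]
    exact if_congr eq_comm rfl rfl
  have hDij : ∀ i j, D i j = ∑ π : Equiv.Perm (Fin k), w π * (π.permMatrix ℝ) i j := by
    intro i j
    rw [← hwD, Matrix.sum_apply]
    exact Finset.sum_congr rfl fun π _ => by rw [Matrix.smul_apply, smul_eq_mul]
  have hinner : ∀ i, ∑ j, a i * bb j * D i j
      = ∑ π : Equiv.Perm (Fin k), w π * (a i * bb (π i)) := by
    intro i
    calc ∑ j, a i * bb j * D i j
        = ∑ j, ∑ π : Equiv.Perm (Fin k), w π * (a i * bb j * (π.permMatrix ℝ) i j) := by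
          refine Finset.sum_congr rfl fun j _ => ?_
          rw [hDij i j, Finset.mul_sum]
          exact Finset.sum_congr rfl fun π _ => by ring
      _ = ∑ π : Equiv.Perm (Fin k), ∑ j, w π * (a i * bb j * (π.permMatrix ℝ) i j) :=
          Finset.sum_comm
      _ = ∑ π : Equiv.Perm (Fin k), w π * (a i * bb (π i)) := by
          refine Finset.sum_congr rfl fun π _ => ?_
          have : ∀ j, w π * (a i * bb j * (π.permMatrix ℝ) i j)
              = if j = π i then w π * (a i * bb j) else 0 := by
            intro j
            rw [hP]
            split_ifs <;> ring
          rw [Finset.sum_congr rfl fun j _ => this j,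
            Finset.sum_ite_eq' Finset.univ (π i) (fun j => w π * (a i * bb j))]
          simp
  have hobjD : ∑ i, ∑ j, a i * bb j * D i j = ∑ π : Equiv.Perm (Fin k), w π * v π := by
    calc ∑ i, ∑ j, a i * bb j * D i j
        = ∑ i, ∑ π : Equiv.Perm (Fin k), w π * (a i * bb (π i)) :=
          Finset.sum_congr rfl fun i _ => hinner i
      _ = ∑ π : Equiv.Perm (Fin k), ∑ i, w π * (a i * bb (π i)) := Finset.sum_comm
      _ = ∑ π : Equiv.Perm (Fin k), w π * v π :=
          Finset.sum_congr rfl fun π _ => by rw [hvdef, Finset.mul_sum]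
  -- extract a permutation
  by_contra hcon
  push_neg at hcon
  have hle : ∑ i, ∑ j, a i * bb j * B i j ≤ ∑ π : Equiv.Perm (Fin k), w π * v π := by
    rw [← hobjD]; exact step1.trans step2
  obtain ⟨π₀, _, hπ₀⟩ := Finset.exists_ne_zero_of_sum_ne_zero (by rw [hw1]; exact one_ne_zero)
  have hπ₀pos : 0 < w π₀ := lt_of_le_of_ne (hw0 π₀) (Ne.symm hπ₀)
  have hlt : ∑ π : Equiv.Perm (Fin k), w π * v π
      < ∑ π : Equiv.Perm (Fin k), w π * (∑ i, ∑ j, a i * bb j * B i j) := by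
    refine Finset.sum_lt_sum (fun π _ => ?_) ⟨π₀, Finset.mem_univ π₀, ?_⟩
    · exact mul_le_mul_of_nonneg_left (le_of_lt (hcon π)) (hw0 π)
    · exact mul_lt_mul_of_pos_left (hcon π₀) hπ₀pos
  rw [← Finset.sum_mul, hw1, one_mul] at hlt
  exact absurd (hle.trans_lt hlt) (lt_irrefl _)

end Stmt17

namespace Stmt17

open Matrix

lemma singVals_nonneg {n m : ℕ} (X : Matrix (Fin n) (Fin m) ℝ) (i : Fin n) :
    0 ≤ singVals X i := Real.sqrt_nonneg _

lemma eig_eq_sq_singVals {n m : ℕ} (X : Matrix (Fin n) (Fin m) ℝ) (i : Fin n) :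
    (Matrix.isHermitian_mul_conjTranspose_self X).eigenvalues i = (singVals X i) ^ 2 := by
  rw [singVals, Real.sq_sqrt (Matrix.eigenvalues_self_mul_conjTranspose_nonneg X i)]

lemma exists_svd {n m : ℕ} (hnm : n ≤ m) (X : Matrix (Fin n) (Fin m) ℝ) :
    ∃ (U : Matrix (Fin n) (Fin n) ℝ) (V : Matrix (Fin m) (Fin m) ℝ),
      U * Uᵀ = 1 ∧ Uᵀ * U = 1 ∧ V * Vᵀ = 1 ∧ Vᵀ * V = 1 ∧
      X = U * rect n m (singVals X) * Vᵀ := by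
  classical
  set hH : (X * Xᴴ).IsHermitian := Matrix.isHermitian_mul_conjTranspose_self X with hHdef
  set σ : Fin n → ℝ := singVals X with hσdef
  have hlamq : ∀ i, hH.eigenvalues i = σ i ^ 2 := fun i => eig_eq_sq_singVals X i
  set U : Matrix (Fin n) (Fin n) ℝ := (hH.eigenvectorUnitary : Matrix (Fin n) (Fin n) ℝ)
    with hUdef
  have hUunit := hH.eigenvectorUnitary.2
  rw [Unitary.mem_iff, Matrix.star_eq_conjTranspose,
    Matrix.conjTranspose_eq_transpose_of_trivial] at hUunit
  have hU1 : U * Uᵀ = 1 := hUunit.2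
  have hU2 : Uᵀ * U = 1 := hUunit.1
  set u : Fin n → (Fin n → ℝ) := fun i => ⇑(hH.eigenvectorBasis i) with hudef
  have hUu : ∀ p i, U p i = u i p := fun p i => rfl
  have huu : ∀ i j, u i ⬝ᵥ u j = if i = j then 1 else 0 := by
    intro i j
    have h := congrFun (congrFun hU2 i) j
    rw [Matrix.mul_apply] at h
    have : ∑ p, Uᵀ i p * U p j = u i ⬝ᵥ u j := by
      refine Finset.sum_congr rfl fun p _ => ?_
      rw [Matrix.transpose_apply, hUu p i, hUu p j]
    rw [this] at h
    rw [h, Matrix.one_apply]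
  have hmul : ∀ j, (X * Xᴴ) *ᵥ u j = hH.eigenvalues j • u j := fun j =>
    hH.mulVec_eigenvectorBasis j
  set w : Fin n → (Fin m → ℝ) := fun i => Xᵀ *ᵥ u i with hwdef
  have hww : ∀ i j, w i ⬝ᵥ w j = if i = j then hH.eigenvalues i else 0 := by
    intro i j
    have step : w i ⬝ᵥ w j = ((X * Xᴴ) *ᵥ u i) ⬝ᵥ u j := by
      calc w i ⬝ᵥ w j = (w i ᵥ* Xᵀ) ⬝ᵥ u j := (Matrix.dotProduct_mulVec _ _ _)
        _ = (X *ᵥ w i) ⬝ᵥ u j := by rw [Matrix.vecMul_transpose]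
        _ = ((X * Xᵀ) *ᵥ u i) ⬝ᵥ u j := by rw [hwdef]; rw [Matrix.mulVec_mulVec]
        _ = ((X * Xᴴ) *ᵥ u i) ⬝ᵥ u j := by
            rw [Matrix.conjTranspose_eq_transpose_of_trivial]
    rw [step, hmul i, smul_dotProduct, huu i j, smul_eq_mul]
    split_ifs <;> ring
  have hw0 : ∀ i, σ i = 0 → w i = 0 := by
    intro i h0
    have : w i ⬝ᵥ w i = 0 := by rw [hww i i, if_pos rfl, hlamq, h0]; ring
    exact dotProduct_self_eq_zero.mp this
  -- right singular vectors
  set v : Fin m → EuclideanSpace ℝ (Fin m) := fun l =>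
    if h : (l : ℕ) < n then (σ ⟨l, h⟩)⁻¹ • ((WithLp.equiv 2 (Fin m → ℝ)).symm (w ⟨l, h⟩))
    else 0 with hvdef
  set s : Set (Fin m) := {l | ∃ h : (l : ℕ) < n, σ ⟨l, h⟩ ≠ 0} with hsdef
  have hinner : ∀ (x y : Fin m → ℝ),
      (inner ℝ ((WithLp.equiv 2 (Fin m → ℝ)).symm x) ((WithLp.equiv 2 (Fin m → ℝ)).symm y) : ℝ)
        = x ⬝ᵥ y := by
    intro x y
    rw [PiLp.inner_apply]
    refine Finset.sum_congr rfl fun p _ => ?_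
    simp [dotProduct, starRingEnd_apply, mul_comm]
  have horm : Orthonormal ℝ (s.restrict v) := by
    rw [orthonormal_iff_ite]
    rintro ⟨l₁, hl₁⟩ ⟨l₂, hl₂⟩
    obtain ⟨h₁, hσ₁⟩ := hl₁
    obtain ⟨h₂, hσ₂⟩ := hl₂
    have hv₁ : s.restrict v ⟨l₁, ⟨h₁, hσ₁⟩⟩
        = (σ ⟨l₁, h₁⟩)⁻¹ • ((WithLp.equiv 2 (Fin m → ℝ)).symm (w ⟨l₁, h₁⟩)) := by
      show v l₁ = _; simp only [hvdef, dif_pos h₁]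
    have hv₂ : s.restrict v ⟨l₂, ⟨h₂, hσ₂⟩⟩
        = (σ ⟨l₂, h₂⟩)⁻¹ • ((WithLp.equiv 2 (Fin m → ℝ)).symm (w ⟨l₂, h₂⟩)) := by
      show v l₂ = _; simp only [hvdef, dif_pos h₂]
    rw [hv₁, hv₂, real_inner_smul_left, real_inner_smul_right, hinner]
    rw [hww]
    by_cases hll : l₁ = l₂
    · subst hll
      have : (⟨l₁, h₁⟩ : Fin n) = ⟨l₁, h₂⟩ := rfl
      rw [if_pos this, hlamq]
      have hσne : σ ⟨l₁, h₁⟩ ≠ 0 := hσ₁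
      rw [if_pos rfl]
      field_simp
    · have hne1 : (⟨l₁, h₁⟩ : Fin n) ≠ ⟨l₂, h₂⟩ := by
        intro hcon
        exact hll (Fin.ext (show (l₁ : ℕ) = (l₂ : ℕ) from congrArg (Fin.val : Fin n → ℕ) hcon))
      have hne2 : (⟨l₁, ⟨h₁, hσ₁⟩⟩ : s) ≠ ⟨l₂, ⟨h₂, hσ₂⟩⟩ := by
        intro hcon
        exact hll (congrArg Subtype.val hcon)
      rw [if_neg hne1, if_neg hne2]
      ring
  obtain ⟨b, hb⟩ := horm.exists_orthonormalBasis_extension_of_card_eq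
    (by simp [finrank_euclideanSpace])
  set V : Matrix (Fin m) (Fin m) ℝ := Matrix.of (fun p l => b l p) with hVdef
  have hVo : Vᵀ * V = 1 := by
    ext l l'
    rw [Matrix.mul_apply]
    have : ∑ p, Vᵀ l p * V p l' = (inner ℝ (b l) (b l') : ℝ) := by
      rw [PiLp.inner_apply]
      refine Finset.sum_congr rfl fun p _ => ?_
      simp [hVdef, starRingEnd_apply, mul_comm]
    rw [this, orthonormal_iff_ite.mp b.orthonormal l l', Matrix.one_apply]
  have hV1 : V * Vᵀ = 1 := mul_eq_one_comm.mp hVo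
  -- main identity
  have hmain : Uᵀ * X = rect n m σ * Vᵀ := by
    ext i jj
    have hL : (Uᵀ * X) i jj = w i jj := by
      rw [Matrix.mul_apply, hwdef]
      show _ = (Xᵀ *ᵥ u i) jj
      rw [Matrix.mulVec]
      show _ = (fun k => Xᵀ jj k) ⬝ᵥ u i
      rw [dotProduct]
      refine Finset.sum_congr rfl fun p _ => ?_
      rw [Matrix.transpose_apply, hUu p i, Matrix.transpose_apply, mul_comm]
    have hR : (rect n m σ * Vᵀ) i jj = σ i * b (Fin.castLE hnm i) jj := by
      rw [Matrix.mul_apply]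
      have : ∀ l, rect n m σ i l * Vᵀ l jj
          = if (l : ℕ) = (i : ℕ) then σ i * V jj l else 0 := by
        intro l
        rw [rect_apply, Matrix.transpose_apply]
        split_ifs <;> ring
      rw [Finset.sum_congr rfl fun l _ => this l]
      have := sum_single_castLE hnm i (fun l => σ i * V jj l)
      rw [this]
      rfl
    rw [hL, hR]
    by_cases hzero : σ i = 0
    · rw [hzero, hw0 i hzero]
      simp
    · have hlt : ((Fin.castLE hnm i : Fin m) : ℕ) < n := by simpa using i.2
      have hidx : (⟨(Fin.castLE hnm i : Fin m), hlt⟩ : Fin n) = i := Fin.ext (by simp)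
      have hmem : (Fin.castLE hnm i) ∈ s := ⟨hlt, by rw [hidx]; exact hzero⟩
      have hbv := hb _ hmem
      have : b (Fin.castLE hnm i)
          = (σ i)⁻¹ • ((WithLp.equiv 2 (Fin m → ℝ)).symm (w i)) := by
        rw [hbv, hvdef]
        simp only [dif_pos hlt, hidx]
      rw [this]
      have : ((σ i)⁻¹ • ((WithLp.equiv 2 (Fin m → ℝ)).symm (w i))) jj
          = (σ i)⁻¹ * w i jj := rfl
      rw [this]
      field_simp
  refine ⟨U, V, hU1, hU2, hV1, hVo, ?_⟩
  rw [Matrix.mul_assoc, ← hmain, ← Matrix.mul_assoc, hU1, Matrix.one_mul]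

end Stmt17

namespace Stmt17

lemma eigenvalues_congr {k : ℕ} {A B : Matrix (Fin k) (Fin k) ℝ} (h : A = B)
    (hA : A.IsHermitian) (hB : B.IsHermitian) : hA.eigenvalues = hB.eigenvalues := by
  subst h; rfl

lemma singVals_conj_multiset {n m : ℕ} (hnm : n ≤ m) {U : Matrix (Fin n) (Fin n) ℝ}
    {V : Matrix (Fin m) (Fin m) ℝ} (hU1 : U * Uᵀ = 1) (hV : Vᵀ * V = 1)
    (t : Fin n → ℝ) (ht : ∀ i, 0 ≤ t i) :
    Multiset.map (singVals (U * rect n m t * Vᵀ)) Finset.univ.val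
      = Multiset.map t Finset.univ.val := by
  set W : Matrix (Fin n) (Fin m) ℝ := U * rect n m t * Vᵀ with hWdef
  have hWW : W * Wᴴ = U * Matrix.diagonal (fun i => t i * t i) * Uᵀ := by
    rw [Matrix.conjTranspose_eq_transpose_of_trivial, hWdef, Matrix.transpose_mul,
      Matrix.transpose_mul, Matrix.transpose_transpose]
    calc U * rect n m t * Vᵀ * (V * ((rect n m t)ᵀ * Uᵀ))
        = U * rect n m t * (Vᵀ * V) * ((rect n m t)ᵀ * Uᵀ) := by
          rw [Matrix.mul_assoc (U * rect n m t), ← Matrix.mul_assoc Vᵀ,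
            Matrix.mul_assoc (U * rect n m t)]
      _ = U * (rect n m t * (rect n m t)ᵀ) * Uᵀ := by
          rw [hV, Matrix.mul_one, ← Matrix.mul_assoc (U * rect n m t) ((rect n m t)ᵀ) Uᵀ,
            Matrix.mul_assoc U (rect n m t) ((rect n m t)ᵀ)]
      _ = U * Matrix.diagonal (fun i => t i * t i) * Uᵀ := by
          rw [rect_mul_rect_transpose hnm]
  have hHerm : (W * Wᴴ).IsHermitian := Matrix.isHermitian_mul_conjTranspose_self W
  have hHerm2 : (U * Matrix.diagonal (fun i => t i * t i) * Uᵀ).IsHermitian := hWW ▸ hHerm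
  have heig : hHerm.eigenvalues = hHerm2.eigenvalues := eigenvalues_congr hWW hHerm hHerm2
  have hms := eigs_conj_diag hU1 (fun i => t i * t i) hHerm2
  have hsing : singVals W = fun i => Real.sqrt (hHerm.eigenvalues i) := rfl
  calc Multiset.map (singVals W) Finset.univ.val
      = Multiset.map Real.sqrt (Multiset.map hHerm.eigenvalues Finset.univ.val) := by
        rw [hsing, Multiset.map_map]; rfl
    _ = Multiset.map Real.sqrt (Multiset.map (fun i => t i * t i) Finset.univ.val) := by
        rw [heig, hms]
    _ = Multiset.map (fun i => Real.sqrt (t i * t i)) Finset.univ.val := by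
        rw [Multiset.map_map]; rfl
    _ = Multiset.map t Finset.univ.val := by
        refine Multiset.map_congr rfl fun i _ => ?_
        rw [Real.sqrt_mul_self (ht i)]

lemma trace_conj_rect {n m : ℕ} (hnm : n ≤ m) (G : Matrix (Fin n) (Fin n) ℝ)
    (K : Matrix (Fin m) (Fin m) ℝ) (t d : Fin n → ℝ) :
    Matrix.trace (G * rect n m t * K * (rect n m d)ᵀ)
      = ∑ i, ∑ k, d i * t k * (G i k * K (Fin.castLE hnm k) (Fin.castLE hnm i)) := by
  have hdiag : ∀ i, (G * rect n m t * K * (rect n m d)ᵀ) i i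
      = d i * (G * rect n m t * K) i (Fin.castLE hnm i) := by
    intro i
    rw [Matrix.mul_apply]
    have hterm : ∀ l, (G * rect n m t * K) i l * (rect n m d)ᵀ l i
        = if (l : ℕ) = (i : ℕ) then (G * rect n m t * K) i l * d i else 0 := fun l => by
      rw [Matrix.transpose_apply, rect_apply]; split_ifs <;> ring
    rw [Finset.sum_congr rfl fun l _ => hterm l,
      sum_single_castLE hnm i (fun l => (G * rect n m t * K) i l * d i)]
    ring
  have hGtK : ∀ (i : Fin n) (jj : Fin m), (G * rect n m t * K) i jj
      = ∑ k, t k * (G i k * K (Fin.castLE hnm k) jj) := by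
    intro i jj
    rw [Matrix.mul_apply]
    have h1 : ∀ l : Fin m, (G * rect n m t) i l
        = ∑ k : Fin n, (if (l : ℕ) = ((k : Fin n) : ℕ) then G i k * t k else 0) := by
      intro l
      rw [Matrix.mul_apply]
      refine Finset.sum_congr rfl fun k _ => ?_
      rw [rect_apply]; split_ifs <;> ring
    calc ∑ l, (G * rect n m t) i l * K l jj
        = ∑ l : Fin m, ∑ k : Fin n, (if ((l : Fin m) : ℕ) = ((k : Fin n) : ℕ) then G i k * t k * K l jj else 0) := by
          refine Finset.sum_congr rfl fun l _ => ?_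
          rw [h1 l, Finset.sum_mul]
          refine Finset.sum_congr rfl fun k _ => ?_
          split_ifs <;> ring
      _ = ∑ k : Fin n, ∑ l : Fin m, (if ((l : Fin m) : ℕ) = ((k : Fin n) : ℕ) then G i k * t k * K l jj else 0) :=
          Finset.sum_comm
      _ = ∑ k, G i k * t k * K (Fin.castLE hnm k) jj := by
          refine Finset.sum_congr rfl fun k _ =>
            sum_single_castLE hnm k (fun l => G i k * t k * K l jj)
      _ = ∑ k, t k * (G i k * K (Fin.castLE hnm k) jj) := by
          refine Finset.sum_congr rfl fun k _ => by ring
  calc Matrix.trace (G * rect n m t * K * (rect n m d)ᵀ)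
      = ∑ i, (G * rect n m t * K * (rect n m d)ᵀ) i i := rfl
    _ = ∑ i, ∑ k, d i * t k * (G i k * K (Fin.castLE hnm k) (Fin.castLE hnm i)) := by
        refine Finset.sum_congr rfl fun i _ => ?_
        rw [hdiag i, hGtK i, Finset.mul_sum]
        refine Finset.sum_congr rfl fun k _ => by ring

end Stmt17


open Stmt17 in
/-- for `ψ` equal to a convex `φ` on `[0,1]` and `+∞` elsewhere, and any
`ρ > 0` and matrix `X`,
`sup_W {⟨W, ρX⟩ − ∑_i ψ(σ_i(W))} = ∑_i ψ*(ρ·σ_i(X))`; since `ψ = +∞` off `[0,1]`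
and `σ_i(W) ≥ 0`, the supremum is over the `W` with all singular values `≤ 1`. -/
theorem stmt17 (n m : ℕ) (hnm : n ≤ m) (φ : ℝ → ℝ)
    (hφ : ConvexOn ℝ Set.univ φ) (ρ : ℝ) (hρ : 0 < ρ)
    (X : Matrix (Fin n) (Fin m) ℝ) :
    sSup {v : ℝ | ∃ W : Matrix (Fin n) (Fin m) ℝ, (∀ i, singVals W i ≤ 1) ∧
        v = minner W (ρ • X) - ∑ i, φ (singVals W i)} =
      ∑ i, psiStar φ (ρ * singVals X i) := by
  classical
  have hφc : Continuous φ := continuous_of_convexOn hφ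
  obtain ⟨U, V, hU1, hU2, hV1, hV2, hX⟩ := exists_svd hnm X
  set S : Set ℝ := {v : ℝ | ∃ W : Matrix (Fin n) (Fin m) ℝ, (∀ i, singVals W i ≤ 1) ∧
      v = minner W (ρ • X) - ∑ i, φ (singVals W i)} with hSdef
  -- upper bound
  have hub : ∀ v ∈ S, v ≤ ∑ i, psiStar φ (ρ * singVals X i) := by
    rintro v ⟨W, hW1, rfl⟩
    have ht0 : ∀ i, 0 ≤ singVals W i := fun i => singVals_nonneg W i
    have hσ0 : ∀ i, 0 ≤ singVals X i := fun i => singVals_nonneg X i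
    obtain ⟨P, Q, hP1, hP2, hQ1, hQ2, hW⟩ := exists_svd hnm W
    set G : Matrix (Fin n) (Fin n) ℝ := Uᵀ * P with hG
    set K : Matrix (Fin m) (Fin m) ℝ := Qᵀ * V with hK
    have hGGT : G * Gᵀ = 1 := by
      rw [hG, Matrix.transpose_mul, Matrix.transpose_transpose,
        Matrix.mul_assoc Uᵀ P (Pᵀ * U), ← Matrix.mul_assoc P Pᵀ U, hP1, Matrix.one_mul, hU2]
    have hGTG : Gᵀ * G = 1 := by
      rw [hG, Matrix.transpose_mul, Matrix.transpose_transpose,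
        Matrix.mul_assoc Pᵀ U (Uᵀ * P), ← Matrix.mul_assoc U Uᵀ P, hU1, Matrix.one_mul, hP2]
    have hKKT : K * Kᵀ = 1 := by
      rw [hK, Matrix.transpose_mul, Matrix.transpose_transpose,
        Matrix.mul_assoc Qᵀ V (Vᵀ * Q), ← Matrix.mul_assoc V Vᵀ Q, hV1, Matrix.one_mul, hQ2]
    have hKTK : Kᵀ * K = 1 := by
      rw [hK, Matrix.transpose_mul, Matrix.transpose_transpose,
        Matrix.mul_assoc Vᵀ Q (Qᵀ * V), ← Matrix.mul_assoc Q Qᵀ V, hQ1, Matrix.one_mul, hV2]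
    -- row and column square sums
    have hGr : ∀ i, ∑ k, G i k ^ 2 = 1 := by
      intro i
      calc ∑ k, G i k ^ 2 = ∑ k, G i k * Gᵀ k i := by
            refine Finset.sum_congr rfl fun k _ => ?_
            rw [Matrix.transpose_apply, sq]
        _ = (G * Gᵀ) i i := (Matrix.mul_apply).symm
        _ = 1 := by rw [hGGT, Matrix.one_apply_eq]
    have hGc : ∀ k, ∑ i, G i k ^ 2 = 1 := by
      intro k
      calc ∑ i, G i k ^ 2 = ∑ i, Gᵀ k i * G i k := by
            refine Finset.sum_congr rfl fun i _ => ?_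
            rw [Matrix.transpose_apply, sq]
        _ = (Gᵀ * G) k k := (Matrix.mul_apply).symm
        _ = 1 := by rw [hGTG, Matrix.one_apply_eq]
    have hKr : ∀ p : Fin m, ∑ l, K p l ^ 2 = 1 := by
      intro p
      calc ∑ l, K p l ^ 2 = ∑ l, K p l * Kᵀ l p := by
            refine Finset.sum_congr rfl fun l _ => ?_
            rw [Matrix.transpose_apply, sq]
        _ = (K * Kᵀ) p p := (Matrix.mul_apply).symm
        _ = 1 := by rw [hKKT, Matrix.one_apply_eq]
    have hKc : ∀ p : Fin m, ∑ l, K l p ^ 2 = 1 := by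
      intro p
      calc ∑ l, K l p ^ 2 = ∑ l, Kᵀ p l * K l p := by
            refine Finset.sum_congr rfl fun l _ => ?_
            rw [Matrix.transpose_apply, sq]
        _ = (Kᵀ * K) p p := (Matrix.mul_apply).symm
        _ = 1 := by rw [hKTK, Matrix.one_apply_eq]
    -- partial sums over the embedded index
    have hsub_col : ∀ i : Fin n, ∑ k : Fin n, K (Fin.castLE hnm k) (Fin.castLE hnm i) ^ 2 ≤ 1 := by
      intro i
      have hinj : ∑ k : Fin n, K (Fin.castLE hnm k) (Fin.castLE hnm i) ^ 2
          = ∑ l ∈ Finset.univ.map (Fin.castLEEmb hnm),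
              K l (Fin.castLE hnm i) ^ 2 := by
        rw [Finset.sum_map]
        rfl
      rw [hinj]
      calc ∑ l ∈ Finset.univ.map (Fin.castLEEmb hnm), K l (Fin.castLE hnm i) ^ 2
          ≤ ∑ l : Fin m, K l (Fin.castLE hnm i) ^ 2 :=
            Finset.sum_le_univ_sum_of_nonneg (fun l => sq_nonneg _)
        _ = 1 := hKc _
    have hsub_row : ∀ k : Fin n, ∑ i : Fin n, K (Fin.castLE hnm k) (Fin.castLE hnm i) ^ 2 ≤ 1 := by
      intro k
      have hinj : ∑ i : Fin n, K (Fin.castLE hnm k) (Fin.castLE hnm i) ^ 2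
          = ∑ l ∈ Finset.univ.map (Fin.castLEEmb hnm),
              K (Fin.castLE hnm k) l ^ 2 := by
        rw [Finset.sum_map]
        rfl
      rw [hinj]
      calc ∑ l ∈ Finset.univ.map (Fin.castLEEmb hnm), K (Fin.castLE hnm k) l ^ 2
          ≤ ∑ l : Fin m, K (Fin.castLE hnm k) l ^ 2 :=
            Finset.sum_le_univ_sum_of_nonneg (fun l => sq_nonneg _)
        _ = 1 := hKr _
    -- substochastic matrix
    set BB : Matrix (Fin n) (Fin n) ℝ :=
      Matrix.of (fun i k => G i k * K (Fin.castLE hnm k) (Fin.castLE hnm i)) with hBB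
    have hBBapp : ∀ i k, BB i k = G i k * K (Fin.castLE hnm k) (Fin.castLE hnm i) :=
      fun i k => rfl
    have hrowB : ∀ i, ∑ k, |BB i k| ≤ 1 := by
      intro i
      have hcs := Finset.sum_mul_sq_le_sq_mul_sq Finset.univ (fun k => |G i k|)
        (fun k => |K (Fin.castLE hnm k) (Fin.castLE hnm i)|)
      have h1 : ∑ k, |G i k| ^ 2 = 1 := by
        simp only [sq_abs]; exact hGr i
      have h2 : ∑ k : Fin n, |K (Fin.castLE hnm k) (Fin.castLE hnm i)| ^ 2 ≤ 1 := by
        simp only [sq_abs]; exact hsub_col i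
      have hkey : (∑ k, |BB i k|) ^ 2 ≤ 1 := by
        calc (∑ k, |BB i k|) ^ 2
            = (∑ k, |G i k| * |K (Fin.castLE hnm k) (Fin.castLE hnm i)|) ^ 2 := by
              congr 1
              refine Finset.sum_congr rfl fun k _ => ?_
              rw [hBBapp, abs_mul]
          _ ≤ (∑ k, |G i k| ^ 2) * (∑ k, |K (Fin.castLE hnm k) (Fin.castLE hnm i)| ^ 2) := hcs
          _ ≤ 1 := by rw [h1, one_mul]; exact h2
      have hnn : 0 ≤ ∑ k, |BB i k| := Finset.sum_nonneg fun k _ => abs_nonneg _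
      nlinarith [hkey, hnn]
    have hcolB : ∀ k, ∑ i, |BB i k| ≤ 1 := by
      intro k
      have hcs := Finset.sum_mul_sq_le_sq_mul_sq Finset.univ (fun i => |G i k|)
        (fun i => |K (Fin.castLE hnm k) (Fin.castLE hnm i)|)
      have h1 : ∑ i, |G i k| ^ 2 = 1 := by
        simp only [sq_abs]; exact hGc k
      have h2 : ∑ i : Fin n, |K (Fin.castLE hnm k) (Fin.castLE hnm i)| ^ 2 ≤ 1 := by
        simp only [sq_abs]; exact hsub_row k
      have hkey : (∑ i, |BB i k|) ^ 2 ≤ 1 := by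
        calc (∑ i, |BB i k|) ^ 2
            = (∑ i, |G i k| * |K (Fin.castLE hnm k) (Fin.castLE hnm i)|) ^ 2 := by
              congr 1
              refine Finset.sum_congr rfl fun i _ => ?_
              rw [hBBapp, abs_mul]
          _ ≤ (∑ i, |G i k| ^ 2) * (∑ i, |K (Fin.castLE hnm k) (Fin.castLE hnm i)| ^ 2) := hcs
          _ ≤ 1 := by rw [h1, one_mul]; exact h2
      have hnn : 0 ≤ ∑ i, |BB i k| := Finset.sum_nonneg fun i _ => abs_nonneg _
      nlinarith [hkey, hnn]
    -- trace identity
    have htr : minner W X = ∑ i, ∑ k, singVals X i * singVals W k * BB i k := by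
      rw [minner_eq_trace]
      have h1 : W * Xᵀ
          = (P * (rect n m (singVals W) * (Qᵀ * (V * ((rect n m (singVals X))ᵀ))))) * Uᵀ := by
        conv_lhs => rw [hW, hX]
        simp only [Matrix.transpose_mul, Matrix.transpose_transpose, Matrix.mul_assoc]
      rw [h1, Matrix.trace_mul_comm]
      have h2 : Uᵀ * (P * (rect n m (singVals W) * (Qᵀ * (V * ((rect n m (singVals X))ᵀ)))))
          = G * rect n m (singVals W) * K * (rect n m (singVals X))ᵀ := by
        rw [hG, hK]
        simp only [Matrix.mul_assoc]
      rw [h2, trace_conj_rect hnm]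
      refine Finset.sum_congr rfl fun i _ => Finset.sum_congr rfl fun k _ => ?_
      rw [hBBapp]
    obtain ⟨π, hπ⟩ := sub_perm (singVals X) (singVals W) hσ0 ht0 BB hrowB hcolB
    calc minner W (ρ • X) - ∑ j, φ (singVals W j)
        = ρ * minner W X - ∑ j, φ (singVals W j) := by rw [minner_smul]
      _ ≤ ρ * (∑ i, singVals X i * singVals W (π i)) - ∑ j, φ (singVals W j) := by
          have hmul := mul_le_mul_of_nonneg_left (htr ▸ hπ) hρ.le
          linarith [hmul]
      _ = ∑ i, (ρ * (singVals X i * singVals W (π i)) - φ (singVals W (π i))) := by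
          rw [← Equiv.sum_comp π (fun j => φ (singVals W j)), Finset.mul_sum,
            ← Finset.sum_sub_distrib]
      _ ≤ ∑ i, psiStar φ (ρ * singVals X i) := by
          refine Finset.sum_le_sum fun i _ => ?_
          refine (psiStar_isGreatest hφc (ρ * singVals X i)).2 ?_
          exact ⟨singVals W (π i), ⟨ht0 _, hW1 _⟩, by ring⟩
  -- membership of the RHS
  have hex : ∀ i, ∃ τ ∈ Set.Icc (0:ℝ) 1,
      psiStar φ (ρ * singVals X i) = (ρ * singVals X i) * τ - φ τ := fun i =>
    (psiStar_isGreatest hφc (ρ * singVals X i)).1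
  choose τ hτmem hτeq using hex
  set W₀ : Matrix (Fin n) (Fin m) ℝ := U * rect n m τ * Vᵀ with hW₀
  have hms := singVals_conj_multiset hnm hU1 hV2 τ (fun i => (hτmem i).1)
  have hle1 : ∀ i, singVals W₀ i ≤ 1 := by
    intro i
    obtain ⟨j, hj⟩ := mem_of_multiset_map_eq hms i
    rw [hj]; exact (hτmem j).2
  have hsumφ : ∑ i, φ (singVals W₀ i) = ∑ i, φ (τ i) := sum_comp_of_multiset_map_eq hms φ
  have hminner : minner W₀ X = ∑ i, τ i * singVals X i := by
    rw [minner_eq_trace]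
    have h1 : W₀ * Xᵀ = U * Matrix.diagonal (fun i => τ i * singVals X i) * Uᵀ := by
      conv_lhs => rw [hW₀, hX]
      calc (U * rect n m τ * Vᵀ) * (U * rect n m (singVals X) * Vᵀ)ᵀ
          = U * (rect n m τ * (Vᵀ * (V * ((rect n m (singVals X))ᵀ * Uᵀ)))) := by
            simp only [Matrix.transpose_mul, Matrix.transpose_transpose, Matrix.mul_assoc]
        _ = U * ((rect n m τ * (rect n m (singVals X))ᵀ) * Uᵀ) := by
            rw [← Matrix.mul_assoc Vᵀ V, hV2, Matrix.one_mul,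
              ← Matrix.mul_assoc (rect n m τ) ((rect n m (singVals X))ᵀ) Uᵀ]
        _ = U * Matrix.diagonal (fun i => τ i * singVals X i) * Uᵀ := by
            rw [rect_mul_rect_transpose hnm, Matrix.mul_assoc]
    rw [h1, Matrix.trace_mul_cycle, hU2, Matrix.one_mul, Matrix.trace_diagonal]
  have hval : minner W₀ (ρ • X) - ∑ i, φ (singVals W₀ i)
      = ∑ i, psiStar φ (ρ * singVals X i) := by
    rw [minner_smul, hminner, hsumφ, Finset.mul_sum, ← Finset.sum_sub_distrib]
    refine Finset.sum_congr rfl fun i _ => ?_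
    rw [hτeq i]; ring
  have hmem : (∑ i, psiStar φ (ρ * singVals X i)) ∈ S := ⟨W₀, hle1, hval.symm⟩
  exact le_antisymm (csSup_le ⟨_, hmem⟩ hub) (le_csSup ⟨_, hub⟩ hmem)
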